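/- Let Γ be a connected graph with vertex set X = {x_1, ..., x_n}, basepoint w = x_n, and edge-path metric dist. For each pair i ≠ j, the supremum over all finite sequences (y_1 = x_i, ..., y_s = x_j) of vertices of min_k (y_k|y_{k+1})_w equals the supremum over all edge-paths (z_1 = x_i, ..., z_t = x_j) in Γ (consecutive vertices adjacent) of min_k (z_k|z_{k+1})_w. -/

import Mathlib

noncomputable section

/-- Gromov product of `x` and `y` at `w` with respect to the distance function `d`. -/
def gromovProd {X : Type*} (d : X → X → ℝ) (w x y : X) : ℝ :=
  (d x w + d y w - d x y) / 2

/-- Bottleneck value: supremum over finite sequences from `x` to `y` of the minimum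
of `c` over consecutive pairs. -/
def bottleneck {α : Type*} (c : α → α → ℝ) (x y : α) : ℝ :=
  sSup {r : ℝ | ∃ (ℓ : ℕ) (hℓ : 0 < ℓ) (f : ℕ → α), f 0 = x ∧ f ℓ = y ∧
    r = (Finset.range ℓ).inf' (Finset.nonempty_range_iff.mpr hℓ.ne')
      (fun k => c (f k) (f (k + 1)))}

/-- Gromov's approximating tree pseudo-metric. -/
def treeDist {X : Type*} (d : X → X → ℝ) (w : X) (x y : X) : ℝ :=
  gromovProd d w x x + gromovProd d w y y - 2 * bottleneck (gromovProd d w) x y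

/-- Bottleneck value restricted to edge-paths of the graph G. -/
def pathBottleneck {V : Type*} (G : SimpleGraph V) (c : V → V → ℝ) (x y : V) : ℝ :=
  sSup {r : ℝ | ∃ (ℓ : ℕ) (hℓ : 0 < ℓ) (f : ℕ → V), f 0 = x ∧ f ℓ = y ∧
    (∀ k < ℓ, G.Adj (f k) (f (k + 1))) ∧
    r = (Finset.range ℓ).inf' (Finset.nonempty_range_iff.mpr hℓ.ne')
      (fun k => c (f k) (f (k + 1)))}

namespace BottleneckAux

open SimpleGraph

variable {V : Type*} {G : SimpleGraph V}

lemma dist_getVert_le (hc : G.Connected) {u v : V} (p : G.Walk u v) (i : ℕ) :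
    G.dist u (p.getVert i) ≤ i := by
  induction p generalizing i with
  | nil => simp [Walk.getVert, SimpleGraph.dist_self]
  | @cons a b c h q ih =>
    cases i with
    | zero => simp [Walk.getVert]
    | succ i =>
      have h1 : G.dist a b ≤ 1 := by
        simpa using SimpleGraph.dist_le h.toWalk
      calc G.dist a ((Walk.cons h q).getVert (i + 1))
          = G.dist a (q.getVert i) := by simp [Walk.getVert]
        _ ≤ G.dist a b + G.dist b (q.getVert i) := hc.dist_triangle
        _ ≤ 1 + i := add_le_add h1 (ih i)
        _ = i + 1 := by omega

lemma dist_getVert_right_le {u v : V} (p : G.Walk u v) (i : ℕ) :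
    G.dist (p.getVert i) v ≤ p.length - i := by
  induction p generalizing i with
  | nil => simp [Walk.getVert]
  | @cons a b c h q ih =>
    cases i with
    | zero =>
      simpa [Walk.getVert] using SimpleGraph.dist_le (Walk.cons h q)
    | succ i =>
      simpa [Walk.getVert] using ih i

/-- Step bound: along a geodesic walk from `u` to `v`, every edge has Gromov product
at least that of `u` and `v`. -/
lemma step_ge (hc : G.Connected) (w : V) {u v : V} (p : G.Walk u v)
    (hp : p.length = G.dist u v) {i : ℕ} (hi : i < p.length) :
    gromovProd (fun a b => (G.dist a b : ℝ)) w u v ≤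
      gromovProd (fun a b => (G.dist a b : ℝ)) w (p.getVert i) (p.getVert (i + 1)) := by
  set gi := p.getVert i
  set gj := p.getVert (i + 1)
  have hA : G.dist u w ≤ i + G.dist gi w :=
    hc.dist_triangle.trans (Nat.add_le_add_right (dist_getVert_le hc p i) _)
  have hB : G.dist v w ≤ (p.length - (i + 1)) + G.dist gj w := by
    have h1 : G.dist v gj ≤ p.length - (i + 1) := by
      rw [SimpleGraph.dist_comm]
      exact dist_getVert_right_le p (i + 1)
    exact hc.dist_triangle.trans (Nat.add_le_add_right h1 _)
  have hC : G.dist gi gj ≤ 1 := by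
    simpa using SimpleGraph.dist_le (p.adj_getVert_succ hi).toWalk
  have hi1 : i + 1 ≤ p.length := hi
  simp only [gromovProd]
  have hL : (G.dist u v : ℝ) = p.length := by exact_mod_cast hp.symm
  rw [hL]
  have hA' : (G.dist u w : ℝ) ≤ i + G.dist gi w := by exact_mod_cast hA
  have hB' : (G.dist v w : ℝ) ≤ (p.length : ℝ) - (i + 1) + G.dist gj w := by
    have := hB
    have h2 : ((p.length - (i + 1) : ℕ) : ℝ) = (p.length : ℝ) - (i + 1) := by
      push_cast [Nat.cast_sub hi1]; ring
    calc (G.dist v w : ℝ) ≤ ((p.length - (i + 1)) + G.dist gj w : ℕ) := by exact_mod_cast hB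
      _ = (p.length : ℝ) - (i + 1) + G.dist gj w := by push_cast [Nat.cast_sub hi1]; ring
  have hC' : (G.dist gi gj : ℝ) ≤ 1 := by exact_mod_cast hC
  linarith

/-- From any sequence `f` one can build an edge-walk from `f 0` to `f ℓ` each of whose edges
has Gromov product at least that of some consecutive pair of `f`. -/
lemma exists_good_walk (hc : G.Connected) (w : V) (ℓ : ℕ) (f : ℕ → V) :
    ∃ p : G.Walk (f 0) (f ℓ), ∀ i < p.length, ∃ k < ℓ,
      gromovProd (fun a b => (G.dist a b : ℝ)) w (f k) (f (k + 1)) ≤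
        gromovProd (fun a b => (G.dist a b : ℝ)) w (p.getVert i) (p.getVert (i + 1)) := by
  induction ℓ with
  | zero => exact ⟨Walk.nil, fun i hi => by simp at hi⟩
  | succ ℓ ih =>
    obtain ⟨p, hp⟩ := ih
    obtain ⟨q, hq⟩ := hc.exists_walk_length_eq_dist (f ℓ) (f (ℓ + 1))
    refine ⟨p.append q, fun i hi => ?_⟩
    rw [Walk.length_append] at hi
    by_cases hcase : i < p.length
    · obtain ⟨k, hk, hle⟩ := hp i hcase
      refine ⟨k, by omega, ?_⟩
      have e1 : (p.append q).getVert i = p.getVert i := by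
        rw [Walk.getVert_append]; simp [hcase]
      have e2 : (p.append q).getVert (i + 1) = p.getVert (i + 1) := by
        rw [Walk.getVert_append]
        by_cases h2 : i + 1 < p.length
        · simp [h2]
        · have h3 : i + 1 = p.length := by omega
          simp [h2, h3, Walk.getVert_length, q.getVert_zero]
      rw [e1, e2]
      exact hle
    · have hj : i - p.length < q.length := by omega
      have e1 : (p.append q).getVert i = q.getVert (i - p.length) := by
        rw [Walk.getVert_append]; simp [hcase]
      have e2 : (p.append q).getVert (i + 1) = q.getVert (i - p.length + 1) := by
        rw [Walk.getVert_append]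
        have : ¬ i + 1 < p.length := by omega
        simp only [this, if_false]
        congr 1
        omega
      refine ⟨ℓ, by omega, ?_⟩
      rw [e1, e2]
      exact step_ge hc w q hq hj

end BottleneckAux

theorem bottleneck_eq_pathBottleneck {V : Type*} [Fintype V] (G : SimpleGraph V)
    (hc : G.Connected) (w x y : V) (hxy : x ≠ y) :
    bottleneck (gromovProd (fun a b => (G.dist a b : ℝ)) w) x y =
      pathBottleneck G (gromovProd (fun a b => (G.dist a b : ℝ)) w) x y := by
  classical
  set c : V → V → ℝ := gromovProd (fun a b => (G.dist a b : ℝ)) w with hc_def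
  set S : Set ℝ := {r : ℝ | ∃ (ℓ : ℕ) (hℓ : 0 < ℓ) (f : ℕ → V), f 0 = x ∧ f ℓ = y ∧
    r = (Finset.range ℓ).inf' (Finset.nonempty_range_iff.mpr hℓ.ne')
      (fun k => c (f k) (f (k + 1)))} with hS_def
  set S' : Set ℝ := {r : ℝ | ∃ (ℓ : ℕ) (hℓ : 0 < ℓ) (f : ℕ → V), f 0 = x ∧ f ℓ = y ∧
    (∀ k < ℓ, G.Adj (f k) (f (k + 1))) ∧
    r = (Finset.range ℓ).inf' (Finset.nonempty_range_iff.mpr hℓ.ne')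
      (fun k => c (f k) (f (k + 1)))} with hS'_def
  -- bound
  have hB : ∃ B : ℝ, ∀ a b : V, c a b ≤ B := by
    refine ⟨(Finset.univ.sup fun u => G.dist u w : ℕ), fun a b => ?_⟩
    have ha : (G.dist a w : ℝ) ≤ (Finset.univ.sup fun u => G.dist u w : ℕ) :=
      Nat.cast_le.mpr (Finset.le_sup (f := fun u => G.dist u w) (Finset.mem_univ a))
    have hb : (G.dist b w : ℝ) ≤ (Finset.univ.sup fun u => G.dist u w : ℕ) :=
      Nat.cast_le.mpr (Finset.le_sup (f := fun u => G.dist u w) (Finset.mem_univ b))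
    have hab : (0 : ℝ) ≤ (G.dist a b : ℝ) := by positivity
    simp only [hc_def, gromovProd]
    linarith
  obtain ⟨B, hBle⟩ := hB
  have hbddS : BddAbove S := by
    refine ⟨B, fun r hr => ?_⟩
    obtain ⟨ℓ, hℓ, f, hf0, hfl, hr⟩ := hr
    rw [hr]
    exact (Finset.inf'_le _ (Finset.mem_range.mpr hℓ)).trans (hBle _ _)
  have hbddS' : BddAbove S' := by
    refine ⟨B, fun r hr => ?_⟩
    obtain ⟨ℓ, hℓ, f, hf0, hfl, _, hr⟩ := hr
    rw [hr]
    exact (Finset.inf'_le _ (Finset.mem_range.mpr hℓ)).trans (hBle _ _)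
  have hSne : S.Nonempty := by
    refine ⟨_, ⟨1, one_pos, fun n => if n = 0 then x else y, by simp, by simp, rfl⟩⟩
  -- every element of S is dominated by an element of S'
  have hdom : ∀ r ∈ S, ∃ r' ∈ S', r ≤ r' := by
    intro r hr
    obtain ⟨ℓ, hℓ, f, hf0, hfl, hr⟩ := hr
    obtain ⟨p, hp⟩ := BottleneckAux.exists_good_walk hc w ℓ f
    have ht : 0 < p.length := by
      rcases Nat.eq_zero_or_pos p.length with h0 | h0
      · exact absurd (hf0 ▸ hfl ▸ SimpleGraph.Walk.eq_of_length_eq_zero h0) hxy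
      · exact h0
    refine ⟨(Finset.range p.length).inf'
        (Finset.nonempty_range_iff.mpr ht.ne') (fun k => c (p.getVert k) (p.getVert (k + 1))),
      ⟨p.length, ht, fun k => p.getVert k, by simp [hf0], by simp [hfl],
        fun k hk => p.adj_getVert_succ hk, rfl⟩, ?_⟩
    apply Finset.le_inf'
    intro i hi
    obtain ⟨k, hk, hle⟩ := hp i (Finset.mem_range.mp hi)
    calc r ≤ c (f k) (f (k + 1)) := hr ▸ Finset.inf'_le _ (Finset.mem_range.mpr hk)
      _ ≤ _ := hle
  have hS'ne : S'.Nonempty := by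
    obtain ⟨r, hr⟩ := hSne
    obtain ⟨r', hr', _⟩ := hdom r hr
    exact ⟨r', hr'⟩
  have hsub : S' ⊆ S := by
    rintro r ⟨ℓ, hℓ, f, hf0, hfl, _, hr⟩
    exact ⟨ℓ, hℓ, f, hf0, hfl, hr⟩
  refine le_antisymm ?_ (csSup_le_csSup hbddS hS'ne hsub)
  apply csSup_le hSne
  intro r hr
  obtain ⟨r', hr', hle⟩ := hdom r hr
  exact hle.trans (le_csSup hbddS' hr')
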